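/- Define the m-barred Callan number recursively counted quantity C(n,k,m) := Σ_{r=0}^{min(n,k)} binom(r+m, m)·(r!)²·S(n+1, r+1)·S(k+1, r+1) with C(n,0,m) = C(0,k,m) = 1. Then for all integers n ≥ 0, k > 0, and m ≥ 0: C(n,k,m) = C(n, k-1, m) + Σ_{j=1}^{n} binom(n,j)·C(n-j+1, k-1, m) + m·Σ_{j=1}^{n} binom(n,j)·C(n-j, k-1, m). -/

import Mathlib

open Finset

/-- Stirling numbers of the second kind. -/
def stirling2 : ℕ → ℕ → ℕ
  | 0, 0 => 1
  | 0, _ + 1 => 0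
  | _ + 1, 0 => 0
  | n + 1, k + 1 => (k + 1) * stirling2 n (k + 1) + stirling2 n k

/-- Unsigned Stirling numbers of the first kind. -/
def stirling1 : ℕ → ℕ → ℕ
  | 0, 0 => 1
  | 0, _ + 1 => 0
  | _ + 1, 0 => 0
  | n + 1, k + 1 => n * stirling1 n (k + 1) + stirling1 n k

/-- The number of m-barred Callan sequences of size n × k. -/
def barredCallan (n k m : ℕ) : ℕ :=
  ∑ r ∈ Finset.range (min n k + 1),
    (r + m).choose m * r.factorial ^ 2 * stirling2 (n + 1) (r + 1) * stirling2 (k + 1) (r + 1)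

lemma stirling2_eq_zero : ∀ {n t : ℕ}, n < t → stirling2 n t = 0
  | 0, _+1, _ => rfl
  | n+1, t+1, h => by
      have h1 : n < t + 1 := by omega
      have h2 : n < t := by omega
      simp [stirling2, stirling2_eq_zero h1, stirling2_eq_zero h2]

lemma std : ∀ (n t : ℕ),
    ∑ i ∈ range (n+1), n.choose i * stirling2 i t = stirling2 (n+1) (t+1) := by
  intro n
  induction n with
  | zero => intro t; cases t <;> simp [stirling2]
  | succ n ih =>
    intro t
    have hsplit : ∑ i ∈ range (n+2), (n+1).choose i * stirling2 i t
        = (n+1).choose 0 * stirling2 0 t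
          + ∑ i ∈ range (n+1), (n+1).choose (i+1) * stirling2 (i+1) t := by
      rw [Finset.sum_range_succ' (fun i => (n+1).choose i * stirling2 i t) (n+1)]
      ring
    have hpascal : ∑ i ∈ range (n+1), (n+1).choose (i+1) * stirling2 (i+1) t
        = ∑ i ∈ range (n+1), n.choose (i+1) * stirling2 (i+1) t
          + ∑ i ∈ range (n+1), n.choose i * stirling2 (i+1) t := by
      rw [← Finset.sum_add_distrib]
      apply Finset.sum_congr rfl
      intro i _
      rw [Nat.choose_succ_succ]
      ring
    have hfirst : (n+1).choose 0 * stirling2 0 t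
        + ∑ i ∈ range (n+1), n.choose (i+1) * stirling2 (i+1) t
        = stirling2 (n+1) (t+1) := by
      have : (n+1).choose 0 * stirling2 0 t
          + ∑ i ∈ range (n+1), n.choose (i+1) * stirling2 (i+1) t
          = ∑ i ∈ range (n+2), n.choose i * stirling2 i t := by
        rw [Finset.sum_range_succ' (fun i => n.choose i * stirling2 i t) (n+1)]
        simp [Nat.choose_zero_right]
        ring
      rw [this, Finset.sum_range_succ, Nat.choose_succ_self, ih t]
      simp
    have hsecond : ∑ i ∈ range (n+1), n.choose i * stirling2 (i+1) t
        = t * stirling2 (n+1) (t+1) + stirling2 (n+1) t := by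
      cases t with
      | zero =>
        have hz : ∀ i ∈ range (n+1), n.choose i * stirling2 (i+1) 0 = 0 := by
          intro i _
          have : stirling2 (i+1) 0 = 0 := rfl
          simp [this]
        rw [Finset.sum_congr rfl hz]
        simp [stirling2]
      | succ t' =>
        have : ∀ i ∈ range (n+1), n.choose i * stirling2 (i+1) (t'+1)
            = (t'+1) * (n.choose i * stirling2 i (t'+1)) + n.choose i * stirling2 i t' := by
          intro i _
          cases i with
          | zero => simp [stirling2]
          | succ i' => simp only [stirling2]; ring
        rw [Finset.sum_congr rfl this, Finset.sum_add_distrib, ← Finset.mul_sum, ih, ih]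
    rw [hsplit, hpascal, ← add_assoc, hfirst, hsecond]
    show stirling2 (n+1) (t+1) + (t * stirling2 (n+1) (t+1) + stirling2 (n+1) t)
        = stirling2 (n+1+1) (t+1)
    simp only [stirling2]
    ring

lemma key (n t : ℕ) :
    ∑ i ∈ range n, n.choose i * stirling2 (i+1) t = t * stirling2 (n+1) (t+1) := by
  cases t with
  | zero =>
    have hz : ∀ i ∈ range n, n.choose i * stirling2 (i+1) 0 = 0 := by
      intro i _
      have : stirling2 (i+1) 0 = 0 := rfl
      simp [this]
    rw [Finset.sum_congr rfl hz]
    simp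
  | succ t' =>
    have full : ∑ i ∈ range (n+1), n.choose i * stirling2 (i+1) (t'+1)
        = (t'+1) * stirling2 (n+1) (t'+1+1) + stirling2 (n+1) (t'+1) := by
      have : ∀ i ∈ range (n+1), n.choose i * stirling2 (i+1) (t'+1)
          = (t'+1) * (n.choose i * stirling2 i (t'+1)) + n.choose i * stirling2 i t' := by
        intro i _
        cases i with
        | zero => simp [stirling2]
        | succ i' => simp only [stirling2]; ring
      rw [Finset.sum_congr rfl this, Finset.sum_add_distrib, ← Finset.mul_sum, std, std]
    have peel : ∑ i ∈ range (n+1), n.choose i * stirling2 (i+1) (t'+1)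
        = ∑ i ∈ range n, n.choose i * stirling2 (i+1) (t'+1) + stirling2 (n+1) (t'+1) := by
      rw [Finset.sum_range_succ, Nat.choose_self, one_mul]
    omega

lemma keyB (n r : ℕ) :
    ∑ i ∈ range n, n.choose i * stirling2 (i+2) (r+1)
      = r * stirling2 (n+1) (r+1) + (r+1) * (r+1) * stirling2 (n+1) (r+2) := by
  have : ∀ i ∈ range n, n.choose i * stirling2 (i+2) (r+1)
      = (r+1) * (n.choose i * stirling2 (i+1) (r+1)) + n.choose i * stirling2 (i+1) r := by
    intro i _
    simp only [stirling2]
    ring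
  rw [Finset.sum_congr rfl this, Finset.sum_add_distrib, ← Finset.mul_sum, key, key]
  have h22 : ∀ x : ℕ, x + 1 + 1 = x + 2 := fun x => rfl
  simp only [h22]
  ring

lemma reindex (n : ℕ) (f : ℕ → ℕ) :
    ∑ j ∈ Icc 1 n, n.choose j * f (n - j) = ∑ i ∈ range n, n.choose i * f i := by
  have h := Finset.sum_range_reflect (fun i => n.choose (1+i) * f (n - (1+i))) n
  rw [← Finset.Ico_add_one_right_eq_Icc, Finset.sum_Ico_eq_sum_range, show n + 1 - 1 = n from rfl]
  rw [← h]
  apply Finset.sum_congr rfl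
  intro i hi
  simp only [mem_range] at hi
  have h1 : 1 + (n - 1 - i) = n - i := by omega
  have h2 : n - (n - i) = i := by omega
  rw [h1, h2, Nat.choose_symm (le_of_lt hi)]

lemma barredCallan_ext (a b m N : ℕ) (h : min a b ≤ N) :
    barredCallan a b m = ∑ r ∈ range (N+1),
      (r + m).choose m * r.factorial ^ 2 * stirling2 (a + 1) (r + 1) * stirling2 (b + 1) (r + 1) := by
  refine Finset.sum_subset (Finset.range_subset_range.2 (by omega)) ?_
  intro r hr hr'
  simp only [mem_range] at hr hr'
  have : min a b < r := by omega
  rcases min_lt_iff.1 this with h1 | h1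
  · rw [stirling2_eq_zero (show a + 1 < r + 1 by omega)]
    ring
  · rw [stirling2_eq_zero (show b + 1 < r + 1 by omega)]
    ring

theorem stmt19 (n k m : ℕ) (hk : 0 < k) :
    barredCallan n k m =
      barredCallan n (k - 1) m
        + ∑ j ∈ Finset.Icc 1 n, n.choose j * barredCallan (n - j + 1) (k - 1) m
        + m * ∑ j ∈ Finset.Icc 1 n, n.choose j * barredCallan (n - j) (k - 1) m := by
  obtain ⟨k', rfl⟩ : ∃ k', k = k' + 1 := ⟨k - 1, by omega⟩
  simp only [Nat.add_sub_cancel]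
  -- abbreviation for the weight
  set b : ℕ → ℕ := fun r => (r + m).choose m * r.factorial ^ 2 with hb
  -- LHS in shifted form
  have s0 : barredCallan n (k'+1) m = ∑ r ∈ range (n+2),
      (b r * ((r+1) * stirling2 (n+1) (r+1) * stirling2 (k'+1) (r+1))
        + b r * ((r+1) * (r+m+1) * stirling2 (n+1) (r+2) * stirling2 (k'+1) (r+1))) := by
    rw [barredCallan_ext n (k'+1) m (n+1) (by omega)]
    have step1 : ∀ r ∈ range (n+2),
        (r + m).choose m * r.factorial ^ 2 * stirling2 (n + 1) (r + 1) * stirling2 (k'+1 + 1) (r + 1)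
        = b r * ((r+1) * stirling2 (n+1) (r+1) * stirling2 (k'+1) (r+1))
          + b r * stirling2 (n+1) (r+1) * stirling2 (k'+1) r := by
      intro r _
      show (r + m).choose m * r.factorial ^ 2 * stirling2 (n + 1) (r + 1)
          * ((r+1) * stirling2 (k'+1) (r+1) + stirling2 (k'+1) r) = _
      ring
    rw [Finset.sum_congr rfl step1, Finset.sum_add_distrib, Finset.sum_add_distrib]
    congr 1
    -- shift the second sum
    have shift : ∑ r ∈ range (n+2), b r * stirling2 (n+1) (r+1) * stirling2 (k'+1) r
        = ∑ r ∈ range (n+1), b (r+1) * stirling2 (n+1) (r+2) * stirling2 (k'+1) (r+1) := by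
      rw [Finset.sum_range_succ' (fun r => b r * stirling2 (n+1) (r+1) * stirling2 (k'+1) r) (n+1)]
      have : stirling2 (k'+1) 0 = 0 := rfl
      simp [this]
    rw [shift]
    have hbr : ∀ r : ℕ, b (r+1) = b r * ((r+1) * (r+m+1)) := by
      intro r
      simp only [hb]
      have h1 : (r+1).factorial = (r+1) * r.factorial := rfl
      have h2 : (r + m + 1) * (r + m).choose r = (r + m + 1).choose (r + 1) * (r + 1) := by
        have := Nat.add_one_mul_choose_eq (r + m) r
        simpa [Nat.succ_eq_add_one] using this
      have h3 : (r + m).choose r = (r + m).choose m := by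
        rw [← Nat.choose_symm (show r ≤ r + m by omega)]
        congr 1
        omega
      have h4 : (r + m + 1).choose (r + 1) = (r + m + 1).choose m := by
        rw [← Nat.choose_symm (show m ≤ r + m + 1 by omega)]
        congr 1
        omega
      have h5 : (r + 1 + m).choose m * (r+1) = (r + m).choose m * (r + m + 1) := by
        have : r + 1 + m = r + m + 1 := by omega
        rw [this, ← h4, ← h2, h3]
        ring
      calc (r + 1 + m).choose m * (r+1).factorial ^ 2
          = ((r + 1 + m).choose m * (r+1)) * ((r+1) * r.factorial ^ 2) := by
            rw [h1]; ring
        _ = ((r + m).choose m * (r + m + 1)) * ((r+1) * r.factorial ^ 2) := by rw [h5]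
        _ = (r + m).choose m * r.factorial ^ 2 * ((r+1) * (r+m+1)) := by ring
    have ext2 : ∑ r ∈ range (n+1), b (r+1) * stirling2 (n+1) (r+2) * stirling2 (k'+1) (r+1)
        = ∑ r ∈ range (n+2), b r * ((r+1) * (r+m+1) * stirling2 (n+1) (r+2) * stirling2 (k'+1) (r+1)) := by
      rw [Finset.sum_range_succ (fun r => b r * ((r+1) * (r+m+1) * stirling2 (n+1) (r+2) * stirling2 (k'+1) (r+1))) (n+1)]
      rw [stirling2_eq_zero (show n + 1 < n + 1 + 2 by omega)]
      simp only [mul_zero, zero_mul, mul_zero, add_zero]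
      apply Finset.sum_congr rfl
      intro r _
      rw [hbr r]
      ring
    rw [ext2]
  -- RHS pieces
  have s1 : ∑ j ∈ Icc 1 n, n.choose j * barredCallan (n - j + 1) k' m
      = ∑ r ∈ range (n+2), b r * stirling2 (k'+1) (r+1)
          * (r * stirling2 (n+1) (r+1) + (r+1) * (r+1) * stirling2 (n+1) (r+2)) := by
    have e3 : ∀ j ∈ Icc 1 n, n.choose j * barredCallan (n - j + 1) k' m
        = ∑ r ∈ range (n+2), n.choose j * (b r * stirling2 (k'+1) (r+1) * stirling2 (n - j + 2) (r+1)) := by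
      intro j hj
      rw [barredCallan_ext (n - j + 1) k' m (n+1) (by simp only [mem_Icc] at hj; omega)]
      rw [Finset.mul_sum]
      apply Finset.sum_congr rfl
      intro r _
      have : n - j + 1 + 1 = n - j + 2 := by omega
      rw [this]
      ring
    rw [Finset.sum_congr rfl e3, Finset.sum_comm]
    apply Finset.sum_congr rfl
    intro r _
    have factor : ∑ j ∈ Icc 1 n, n.choose j * (b r * stirling2 (k'+1) (r+1) * stirling2 (n - j + 2) (r+1))
        = b r * stirling2 (k'+1) (r+1) * ∑ j ∈ Icc 1 n, n.choose j * stirling2 (n - j + 2) (r+1) := by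
      rw [Finset.mul_sum]
      apply Finset.sum_congr rfl
      intro j _
      ring
    rw [factor, reindex n (fun i => stirling2 (i + 2) (r+1)), keyB]
  have s2 : ∑ j ∈ Icc 1 n, n.choose j * barredCallan (n - j) k' m
      = ∑ r ∈ range (n+2), b r * stirling2 (k'+1) (r+1) * ((r+1) * stirling2 (n+1) (r+2)) := by
    have e4 : ∀ j ∈ Icc 1 n, n.choose j * barredCallan (n - j) k' m
        = ∑ r ∈ range (n+2), n.choose j * (b r * stirling2 (k'+1) (r+1) * stirling2 (n - j + 1) (r+1)) := by
      intro j hj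
      rw [barredCallan_ext (n - j) k' m (n+1) (by simp only [mem_Icc] at hj; omega)]
      rw [Finset.mul_sum]
      apply Finset.sum_congr rfl
      intro r _
      ring
    rw [Finset.sum_congr rfl e4, Finset.sum_comm]
    apply Finset.sum_congr rfl
    intro r _
    have factor : ∑ j ∈ Icc 1 n, n.choose j * (b r * stirling2 (k'+1) (r+1) * stirling2 (n - j + 1) (r+1))
        = b r * stirling2 (k'+1) (r+1) * ∑ j ∈ Icc 1 n, n.choose j * stirling2 (n - j + 1) (r+1) := by
      rw [Finset.mul_sum]
      apply Finset.sum_congr rfl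
      intro j _
      ring
    rw [factor, reindex n (fun i => stirling2 (i + 1) (r+1)), key]
  rw [s0, s1, s2, barredCallan_ext n k' m (n+1) (by omega)]
  rw [Finset.mul_sum, ← Finset.sum_add_distrib, ← Finset.sum_add_distrib]
  apply Finset.sum_congr rfl
  intro r _
  simp only [hb]
  ring
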